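/- Let Φ be a semi-coherent structure function on n ≥ 1 components with structural signature s. For every k = 1,…,n, n!·s_k equals the number of permutations σ of {1,…,n} such that, when the components are failed one by one in the order σ(1), σ(2), …, σ(n), the system is working after each of the first k−1 failures and fails exactly at the k-th failure; i.e., s_k is the proportion of failure sequences in which the system first fails at the k-th component failure. -/

import Mathlib

/-- `S̄ k`: the proportion of states with exactly `k` failed components in which
the system works. -/
noncomputable def Sbar (n : ℕ) (Φ : (Fin n → Bool) → Bool) (k : ℕ) : ℝ :=
  ((Finset.univ.filter (fun x : Fin n → Bool =>
      (Finset.univ.filter (fun i => x i = false)).card = k ∧ Φ x = true)).card : ℝ) /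
    (n.choose k : ℝ)

/-- The structural signature `s k = S̄_{k-1} - S̄_k`. -/
noncomputable def structSig (n : ℕ) (Φ : (Fin n → Bool) → Bool) (k : ℕ) : ℝ :=
  Sbar n Φ (k - 1) - Sbar n Φ k

/-- The state `x^{σ,l}` where exactly the first `l` components in the order `σ`
have failed (0-based positions `σ 0, …, σ (l-1)` are failed). -/
def failState (n : ℕ) (σ : Equiv.Perm (Fin n)) (l : ℕ) : Fin n → Bool :=
  fun i => decide (l ≤ ((σ.symm i : Fin n) : ℕ))

section Helpers
open Finset
def ltEquiv (n j : ℕ) (hj : j ≤ n) : {m : Fin n // (m : ℕ) < j} ≃ Fin j where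
  toFun m := ⟨(m.1 : ℕ), m.2⟩
  invFun i := ⟨⟨(i : ℕ), lt_of_lt_of_le i.2 hj⟩, i.2⟩
  left_inv m := rfl
  right_inv i := rfl

lemma fiber_iff {n j : ℕ} {σ : Equiv.Perm (Fin n)} {x : Fin n → Bool}
    (h : failState n σ j = x) (m : Fin n) : ((m : ℕ) < j ↔ x (σ m) = false) := by
  have := congrFun h (σ m)
  simp only [failState, Equiv.symm_apply_apply] at this
  rw [← this]
  simp [Nat.not_le]

def fiberEquiv (n j : ℕ) (x : Fin n → Bool) :
    {σ : Equiv.Perm (Fin n) // failState n σ j = x} ≃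
      (({m : Fin n // (m : ℕ) < j} ≃ {i : Fin n // x i = false}) ×
       ({m : Fin n // ¬ (m : ℕ) < j} ≃ {i : Fin n // ¬ x i = false})) where
  toFun σ := ⟨σ.1.subtypeEquiv (fun m => fiber_iff σ.2 m),
              σ.1.subtypeEquiv (fun m => not_iff_not.mpr (fiber_iff σ.2 m))⟩
  invFun e := ⟨(Equiv.sumCompl (fun m : Fin n => (m : ℕ) < j)).symm.trans
      ((e.1.sumCongr e.2).trans (Equiv.sumCompl (fun i : Fin n => x i = false))), by
    funext i
    by_cases hx : x i = false
    · have h1 : (Equiv.sumCompl (fun i : Fin n => x i = false)).symm i = Sum.inl ⟨i, hx⟩ :=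
        Equiv.sumCompl_symm_apply_of_pos (p := (fun i : Fin n => x i = false)) (a := i) hx
      simp only [failState, Equiv.symm_trans_apply, Equiv.sumCongr_symm, h1,
        Equiv.sumCongr_apply, Sum.map_inl, Equiv.sumCompl_apply_inl]
      have := (e.1.symm ⟨i, hx⟩).2
      simp [Nat.not_le.mpr this, hx]
    · have h1 : (Equiv.sumCompl (fun i : Fin n => x i = false)).symm i = Sum.inr ⟨i, hx⟩ :=
        Equiv.sumCompl_symm_apply_of_neg (p := (fun i : Fin n => x i = false)) (a := i) hx
      simp only [failState, Equiv.symm_trans_apply, Equiv.sumCongr_symm, h1,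
        Equiv.sumCongr_apply, Sum.map_inr, Equiv.sumCompl_apply_inr]
      have h2 := (e.2.symm ⟨i, hx⟩).2
      rw [Nat.not_lt] at h2
      have hx' : x i = true := by simpa using hx
      simp [h2, hx']⟩
  left_inv := by
    rintro ⟨σ, hσ⟩
    ext m
    simp only [Equiv.trans_apply]
    by_cases hm : (m : ℕ) < j
    · rw [Equiv.sumCompl_symm_apply_of_pos (p := (fun m : Fin n => (m : ℕ) < j)) (a := m) hm]
      simp [Equiv.subtypeEquiv]
    · rw [Equiv.sumCompl_symm_apply_of_neg (p := (fun m : Fin n => (m : ℕ) < j)) (a := m) hm]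
      simp [Equiv.subtypeEquiv]
  right_inv := by
    rintro ⟨e1, e2⟩
    ext m
    · simp only [Equiv.subtypeEquiv, Equiv.coe_fn_mk, Equiv.trans_apply]
      rw [Equiv.sumCompl_symm_apply_of_pos (p := (fun m : Fin n => (m : ℕ) < j)) (a := m.1) m.2]
      simp
    · simp only [Equiv.subtypeEquiv, Equiv.coe_fn_mk, Equiv.trans_apply]
      rw [Equiv.sumCompl_symm_apply_of_neg (p := (fun m : Fin n => (m : ℕ) < j)) (a := m.1) m.2]
      simp

lemma fiber_card (n j : ℕ) (hj : j ≤ n) (x : Fin n → Bool)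
    (hx : (univ.filter fun i => x i = false).card = j) :
    (univ.filter fun σ : Equiv.Perm (Fin n) => failState n σ j = x).card =
      j.factorial * (n - j).factorial := by
  have c1 : Fintype.card {m : Fin n // (m : ℕ) < j} = j := by
    rw [Fintype.card_congr (ltEquiv n j hj), Fintype.card_fin]
  have c2 : Fintype.card {i : Fin n // x i = false} = j := by
    rw [Fintype.card_subtype]; exact hx
  have c1' : Fintype.card {m : Fin n // ¬ (m : ℕ) < j} = n - j := by
    rw [Fintype.card_subtype_compl, c1, Fintype.card_fin]
  have c2' : Fintype.card {i : Fin n // ¬ x i = false} = n - j := by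
    rw [Fintype.card_subtype_compl, c2, Fintype.card_fin]
  rw [← Fintype.card_subtype, Fintype.card_congr (fiberEquiv n j x), Fintype.card_prod,
    Fintype.card_equiv (Fintype.equivOfCardEq (c1.trans c2.symm)),
    Fintype.card_equiv (Fintype.equivOfCardEq (c1'.trans c2'.symm)), c1, c1']

lemma failState_count (n j : ℕ) (hj : j ≤ n) (σ : Equiv.Perm (Fin n)) :
    (univ.filter fun i => failState n σ j i = false).card = j := by
  have h : ∀ i : Fin n, (failState n σ j i = false) ↔ ((σ.symm i : ℕ) < j) := by
    intro i; simp [failState, Nat.not_le]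
  rw [filter_congr (fun i _ => by rw [h i])]
  rw [← Fintype.card_subtype,
    Fintype.card_congr (σ.symm.subtypeEquiv (q := fun m : Fin n => (m : ℕ) < j)
      (fun i => Iff.rfl)),
    Fintype.card_congr (ltEquiv n j hj), Fintype.card_fin]

lemma countA (n j : ℕ) (hj : j ≤ n) (Φ : (Fin n → Bool) → Bool) :
    ((univ.filter fun σ : Equiv.Perm (Fin n) => Φ (failState n σ j) = true).card) =
      (univ.filter fun x : Fin n → Bool =>
        (univ.filter fun i => x i = false).card = j ∧ Φ x = true).card *
        (j.factorial * (n - j).factorial) := by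
  have hterm : ∀ x ∈ (univ.filter fun x : Fin n → Bool =>
      (univ.filter fun i => x i = false).card = j ∧ Φ x = true),
      ((univ.filter fun σ : Equiv.Perm (Fin n) => Φ (failState n σ j) = true).filter
        (fun σ => failState n σ j = x)).card = j.factorial * (n - j).factorial := by
    intro x hx
    simp only [mem_filter, mem_univ, true_and] at hx
    rw [filter_filter]
    have heq : (univ.filter fun σ : Equiv.Perm (Fin n) =>
        Φ (failState n σ j) = true ∧ failState n σ j = x) =
        (univ.filter fun σ : Equiv.Perm (Fin n) => failState n σ j = x) := by
      apply filter_congr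
      intro σ _
      constructor
      · exact fun h => h.2
      · exact fun h => ⟨by rw [h]; exact hx.2, h⟩
    rw [heq]
    exact fiber_card n j hj x hx.1
  rw [Finset.card_eq_sum_card_fiberwise (f := fun σ => failState n σ j)
    (t := univ.filter fun x : Fin n → Bool =>
        (univ.filter fun i => x i = false).card = j ∧ Φ x = true)
    (fun σ hσ => by
      simp only [mem_coe, mem_filter, mem_univ, true_and] at hσ ⊢
      exact ⟨failState_count n j hj σ, hσ⟩),
    Finset.sum_congr rfl hterm, Finset.sum_const, smul_eq_mul]

lemma Sbar_eq (n j : ℕ) (hj : j ≤ n) (Φ : (Fin n → Bool) → Bool) :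
    (n.factorial : ℝ) * Sbar n Φ j =
      ((univ.filter fun σ : Equiv.Perm (Fin n) => Φ (failState n σ j) = true).card : ℝ) := by
  rw [countA n j hj Φ, Sbar]
  have hC : (n.choose j : ℝ) ≠ 0 := by
    exact_mod_cast (Nat.choose_pos hj).ne'
  field_simp
  rw [mul_comm]
  push_cast [← Nat.choose_mul_factorial_mul_factorial hj]
  ring

lemma failState_mono (n : ℕ) (σ : Equiv.Perm (Fin n)) {l k : ℕ} (h : l ≤ k) (i : Fin n) :
    failState n σ k i ≤ failState n σ l i := by
  simp only [failState]
  by_cases hk : k ≤ ((σ.symm i : Fin n) : ℕ)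
  · simp [hk, le_trans h hk]
  · simp [hk]

end Helpers

open Finset in
/-- For a semi-coherent system, `n! · s_k` is the number of permutations along which
the system first fails exactly at the `k`-th component failure. -/
theorem stmt0 (n : ℕ) (hn : 1 ≤ n) (Φ : (Fin n → Bool) → Bool)
    (hmono : ∀ x y : Fin n → Bool, (∀ i, x i ≤ y i) → Φ x ≤ Φ y)
    (hΦ0 : Φ (fun _ => false) = false) (hΦ1 : Φ (fun _ => true) = true)
    (k : ℕ) (hk1 : 1 ≤ k) (hkn : k ≤ n) :
    (n.factorial : ℝ) * structSig n Φ k =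
      ((Finset.univ.filter (fun σ : Equiv.Perm (Fin n) =>
        (∀ l < k, Φ (failState n σ l) = true) ∧ Φ (failState n σ k) = false)).card : ℝ) := by
  set A : ℕ → Finset (Equiv.Perm (Fin n)) :=
    fun j => univ.filter fun σ => Φ (failState n σ j) = true with hA
  have hstep : ∀ σ : Equiv.Perm (Fin n), ∀ l k' : ℕ, l ≤ k' →
      Φ (failState n σ k') = true → Φ (failState n σ l) = true := by
    intro σ l k' hlk h
    have := hmono _ _ (failState_mono n σ hlk)
    rw [h] at this
    exact le_antisymm (Bool.le_true _) this
  have hsub : A k ⊆ A (k - 1) := by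
    intro σ hσ
    simp only [hA, mem_filter, mem_univ, true_and] at hσ ⊢
    exact hstep σ (k - 1) k (Nat.sub_le k 1) hσ
  have hset : (Finset.univ.filter (fun σ : Equiv.Perm (Fin n) =>
        (∀ l < k, Φ (failState n σ l) = true) ∧ Φ (failState n σ k) = false)) =
      A (k - 1) \ A k := by
    ext σ
    simp only [hA, mem_filter, mem_univ, true_and, mem_sdiff]
    constructor
    · rintro ⟨h1, h2⟩
      exact ⟨h1 (k - 1) (by omega), by simp [h2]⟩
    · rintro ⟨h1, h2⟩
      refine ⟨fun l hl => hstep σ l (k - 1) (by omega) h1, ?_⟩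
      simpa using h2
  rw [hset, card_sdiff_of_subset hsub, structSig, mul_sub, Sbar_eq n (k - 1) (by omega) Φ,
    Sbar_eq n k hkn Φ]
  rw [Nat.cast_sub (card_le_card hsub)]
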